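/- Let C be a category with pullbacks, a terminal object ⊤, and strict initial objects, such that ⊤ is an extremal generator. Then for any object X and any two global elements x, y : ⊤ ⟶ X with x ≠ y, the pullback of x and y is an initial object of C. -/
import Mathlib


open CategoryTheory CategoryTheory.Limits

universe v u

/-- In a category with pullbacks, a terminal object and strict initial
objects, whose terminal object is an extremal generator, the pullback of two distinct
global elements is an initial object. -/
theorem pullback_of_distinct_points_isInitial {C : Type u} [Category.{v} C]
    [HasPullbacks C] [HasTerminal C] [HasInitial C] [HasStrictInitialObjects C]
    (hgen : ∀ {A B : C} (f g : A ⟶ B), (∀ x : ⊤_ C ⟶ A, x ≫ f = x ≫ g) → f = g)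
    (hext : ∀ {A B : C} (m : A ⟶ B), Mono m →
      (∀ x : ⊤_ C ⟶ B, ∃ y : ⊤_ C ⟶ A, y ≫ m = x) → IsIso m)
    {X : C} (x y : ⊤_ C ⟶ X) (hxy : x ≠ y) :
    Nonempty (IsInitial (pullback x y)) := by
  have hno : ∀ z : ⊤_ C ⟶ pullback x y, False := by
    intro z
    apply hxy
    have h1 : z ≫ pullback.fst x y = 𝟙 _ := Subsingleton.elim _ _
    have h2 : z ≫ pullback.snd x y = 𝟙 _ := Subsingleton.elim _ _
    calc x = (z ≫ pullback.fst x y) ≫ x := by rw [h1]; simp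
      _ = (z ≫ pullback.snd x y) ≫ y := by
          rw [Category.assoc, Category.assoc, pullback.condition]
      _ = y := by rw [h2]; simp
  have : IsIso (initial.to (pullback x y)) := by
    refine hext (initial.to (pullback x y)) (by infer_instance) ?_
    intro z
    exact (hno z).elim
  exact ⟨IsInitial.ofIso initialIsInitial (asIso (initial.to (pullback x y)))⟩
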